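/- Lower bound on the star-cost entropic functional: for any γ ∈ Π(μ¹,...,μᵐ) with two-fold marginals πⁱ(x¹,xⁱ) (projections onto coordinates 1 and i), ∑_x (∑_{i=2}^m w(x¹,xⁱ))γ_x + η H_{⊗μⁱ}(γ) ≥ ∑_{i=2}^m [∑ w(x¹,xⁱ)πⁱ(x¹,xⁱ) + η H_{μ¹⊗μⁱ}(πⁱ)], with equality iff for μ¹-a.e. x¹ the conditional distribution γ_{x¹} is the product of the conditionals πⁱ_{x¹}. -/

import Mathlib

lemma gibbs_aux {α : Type*} [Fintype α] (f g : α → ℝ)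
    (hf : ∀ a, 0 ≤ f a) (hg : ∀ a, 0 ≤ g a)
    (hfg : ∀ a, f a ≠ 0 → g a ≠ 0) (hsum : ∑ a, f a = ∑ a, g a) :
    0 ≤ ∑ a, f a * Real.log (f a / g a) ∧
    ((∑ a, f a * Real.log (f a / g a)) = 0 ↔ ∀ a, f a = g a) := by
  classical
  have key : ∀ a, g a - f a + f a * Real.log (f a / g a) ≥ 0 ∧
      ((g a - f a + f a * Real.log (f a / g a)) = 0 ↔ f a = g a) := by
    intro a
    rcases eq_or_lt_of_le (hf a) with h0 | h0
    · constructor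
      · simp [← h0, hg a]
      · simp [← h0]
        constructor
        · intro h; linarith
        · intro h; linarith
    · have hga : 0 < g a := lt_of_le_of_ne (hg a) (fun h => hfg a h0.ne' h.symm)
      have hq : 0 < g a / f a := div_pos hga h0
      have hle : Real.log (g a / f a) ≤ g a / f a - 1 := Real.log_le_sub_one_of_pos hq
      have hlog : Real.log (f a / g a) = - Real.log (g a / f a) := by
        rw [← Real.log_inv]; congr 1; field_simp
      constructor
      · rw [hlog]
        have : f a * Real.log (g a / f a) ≤ f a * (g a / f a - 1) :=
          mul_le_mul_of_nonneg_left hle h0.le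
        have h2 : f a * (g a / f a - 1) = g a - f a := by field_simp
        nlinarith
      · constructor
        · intro h
          by_contra hne
          have hq1 : g a / f a ≠ 1 := by
            intro h1
            exact hne ((div_eq_one_iff_eq h0.ne').mp h1).symm
          have hlt : Real.log (g a / f a) < g a / f a - 1 :=
            Real.log_lt_sub_one_of_pos hq hq1
          have : f a * Real.log (g a / f a) < f a * (g a / f a - 1) :=
            mul_lt_mul_of_pos_left hlt h0
          have h2 : f a * (g a / f a - 1) = g a - f a := by field_simp
          rw [hlog] at h; nlinarith
        · intro h; rw [h]; simp [div_self (hfg a (h ▸ h0.ne'))]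
  have hsum2 : ∑ a, (g a - f a + f a * Real.log (f a / g a))
      = ∑ a, f a * Real.log (f a / g a) := by
    rw [Finset.sum_add_distrib, Finset.sum_sub_distrib, hsum]; ring
  constructor
  · rw [← hsum2]
    exact Finset.sum_nonneg fun a _ => (key a).1
  · rw [← hsum2]
    rw [Finset.sum_eq_zero_iff_of_nonneg (fun a _ => (key a).1)]
    constructor
    · intro h a; exact (key a).2.mp (h a (Finset.mem_univ a))
    · intro h a _; exact (key a).2.mpr (h a)

/-- Lower bound for the star-cost entropic functional: for any coupling
`γ ∈ Π(μ¹,...,μᵐ)` with two-fold marginals `πⁱ` (onto coordinates 1 and `i`),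
`∑_x (∑ᵢ w(x¹,xⁱ)) γ_x + η H_{⊗μⁱ}(γ) ≥ ∑ᵢ [∑ w πⁱ + η H_{μ¹⊗μⁱ}(πⁱ)]`,
with equality iff for `μ¹`-a.e. `x¹` the conditional of `γ` given `x¹` is the
product of the conditionals of the `πⁱ`. -/
theorem stmt_6 {X1 : Type*} {ι : Type*} [Fintype X1] [DecidableEq X1]
    [Fintype ι] [DecidableEq ι]
    {X : ι → Type*} [∀ i, Fintype (X i)] [∀ i, DecidableEq (X i)]
    (μ1 : X1 → ℝ) (μ : ∀ i, X i → ℝ)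
    (hμ1 : ∀ z, 0 < μ1 z) (hμ1s : ∑ z, μ1 z = 1)
    (hμ : ∀ i y, 0 < μ i y) (hμs : ∀ i, ∑ y, μ i y = 1)
    (w : ∀ i, X1 → X i → ℝ) (η : ℝ) (hη : 0 < η)
    (γ : X1 × (∀ i, X i) → ℝ) (hγ0 : ∀ x, 0 ≤ γ x)
    (hγm1 : ∀ z, ∑ y, γ (z, y) = μ1 z)
    (hγm : ∀ i yi, (∑ x : X1 × (∀ j, X j), if x.2 i = yi then γ x else 0) = μ i yi)
    (π : ∀ i, X1 × X i → ℝ)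
    (hπ : ∀ i p, π i p =
      ∑ x : X1 × (∀ j, X j), if x.1 = p.1 ∧ x.2 i = p.2 then γ x else 0) :
    (∑ x, (∑ i, w i x.1 (x.2 i)) * γ x
        + η * ∑ x, γ x * Real.log (γ x / (μ1 x.1 * ∏ i, μ i (x.2 i)))
      ≥ ∑ i, (∑ p, w i p.1 p.2 * π i p
          + η * ∑ p, π i p * Real.log (π i p / (μ1 p.1 * μ i p.2))))
    ∧ ((∑ x, (∑ i, w i x.1 (x.2 i)) * γ x
        + η * ∑ x, γ x * Real.log (γ x / (μ1 x.1 * ∏ i, μ i (x.2 i)))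
      = ∑ i, (∑ p, w i p.1 p.2 * π i p
          + η * ∑ p, π i p * Real.log (π i p / (μ1 p.1 * μ i p.2))))
      ↔ ∀ z : X1, μ1 z ≠ 0 → ∀ y : ∀ j, X j,
          γ (z, y) / μ1 z = ∏ i, (π i (z, y i) / μ1 z)) := by
  classical
  -- notation
  set ρ : X1 × (∀ j, X j) → ℝ :=
    fun x => μ1 x.1 * ∏ i, (π i (x.1, x.2 i) / μ1 x.1) with hρdef
  -- basic facts about π
  have hπ0 : ∀ i p, 0 ≤ π i p := by
    intro i p
    rw [hπ]
    refine Finset.sum_nonneg fun x _ => ?_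
    split
    · exact hγ0 x
    · exact le_rfl
  have hπγ : ∀ i (x : X1 × (∀ j, X j)), γ x ≤ π i (x.1, x.2 i) := by
    intro i x
    rw [hπ]
    have := Finset.single_le_sum
      (f := fun x' : X1 × (∀ j, X j) =>
        if x'.1 = x.1 ∧ x'.2 i = x.2 i then γ x' else 0)
      (fun x' _ => by
        by_cases hc : x'.1 = x.1 ∧ x'.2 i = x.2 i <;> simp [hc, hγ0 x'])
      (Finset.mem_univ x)
    simpa using this
  -- marginal lemma
  have hmarg : ∀ (i) (f : X1 × X i → ℝ),
      ∑ p, f p * π i p = ∑ x : X1 × (∀ j, X j), f (x.1, x.2 i) * γ x := by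
    intro i f
    simp_rw [hπ, Finset.mul_sum, mul_ite, mul_zero]
    rw [Finset.sum_comm]
    apply Finset.sum_congr rfl
    intro x _
    have : ∀ p : X1 × X i,
        (if x.1 = p.1 ∧ x.2 i = p.2 then f p * γ x else 0)
        = if (x.1, x.2 i) = p then f p * γ x else 0 := by
      intro p
      congr 1
      simp [Prod.ext_iff]
    simp_rw [this]
    rw [Finset.sum_ite_eq]
    simp
  -- marginals of π over the second coordinate
  have hπm : ∀ i z, ∑ yi, π i (z, yi) = μ1 z := by
    intro i z
    simp_rw [hπ]
    rw [Finset.sum_comm]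
    have h1 : ∀ x : X1 × (∀ j, X j),
        (∑ yi, if x.1 = z ∧ x.2 i = yi then γ x else 0)
        = if x.1 = z then γ x else 0 := by
      intro x
      by_cases hx : x.1 = z <;> simp [hx, Finset.sum_ite_eq]
    simp_rw [h1]
    rw [Fintype.sum_prod_type]
    have h2 : ∀ x : X1, (∑ y : ∀ j, X j, if x = z then γ (x, y) else 0)
        = if x = z then μ1 x else 0 := by
      intro x
      by_cases hx : x = z <;> simp [hx, hγm1]
    simp only [h2]
    simp
  -- sums
  have hγsum : ∑ x, γ x = 1 := by
    rw [Fintype.sum_prod_type]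
    simp_rw [hγm1]
    exact hμ1s
  have hρsum : ∑ x, ρ x = 1 := by
    rw [Fintype.sum_prod_type]
    have : ∀ z : X1, ∑ y : ∀ j, X j, ρ (z, y) = μ1 z := by
      intro z
      simp only [hρdef]
      rw [← Finset.mul_sum]
      have hps : ∑ y : ∀ j, X j, ∏ i, (π i (z, y i) / μ1 z)
          = ∏ i, ∑ yi, (π i (z, yi) / μ1 z) := by
        rw [Finset.prod_univ_sum]
        simp [Fintype.piFinset_univ]
      rw [hps]
      have : ∀ i, ∑ yi, π i (z, yi) / μ1 z = 1 := by
        intro i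
        rw [← Finset.sum_div, hπm i z, div_self (hμ1 z).ne']
      simp [this]
    simp_rw [this]
    exact hμ1s
  have hρ0 : ∀ x, 0 ≤ ρ x := by
    intro x
    apply mul_nonneg (hμ1 x.1).le
    exact Finset.prod_nonneg fun i _ => div_nonneg (hπ0 i _) (hμ1 x.1).le
  have hγρ : ∀ x, γ x ≠ 0 → ρ x ≠ 0 := by
    intro x hx
    have hγpos : 0 < γ x := lt_of_le_of_ne (hγ0 x) (Ne.symm hx)
    have : 0 < ρ x := by
      apply mul_pos (hμ1 x.1)
      exact Finset.prod_pos fun i _ =>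
        div_pos (lt_of_lt_of_le hγpos (hπγ i x)) (hμ1 x.1)
    exact this.ne'
  obtain ⟨hS0, hSeq⟩ := gibbs_aux γ ρ hγ0 hρ0 hγρ (by rw [hγsum, hρsum])
  -- rewrite the RHS terms as sums over x
  have hw : ∀ i, ∑ p, w i p.1 p.2 * π i p
      = ∑ x : X1 × (∀ j, X j), w i x.1 (x.2 i) * γ x := by
    intro i
    exact hmarg i (fun p => w i p.1 p.2)
  have hRent : ∀ i, ∑ p, π i p * Real.log (π i p / (μ1 p.1 * μ i p.2))
      = ∑ x : X1 × (∀ j, X j),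
          (Real.log (π i (x.1, x.2 i)) - Real.log (μ1 x.1)
            - Real.log (μ i (x.2 i))) * γ x := by
    intro i
    rw [← hmarg i (fun p => Real.log (π i p) - Real.log (μ1 p.1)
          - Real.log (μ i p.2))]
    apply Finset.sum_congr rfl
    intro p _
    rcases eq_or_lt_of_le (hπ0 i p) with h0 | h0
    · simp [← h0]
    · rw [Real.log_div h0.ne' (mul_pos (hμ1 p.1) (hμ i p.2)).ne',
        Real.log_mul (hμ1 p.1).ne' (hμ i p.2).ne']
      ring
  -- the key identity
  have hkey : ∑ x, (∑ i, w i x.1 (x.2 i)) * γ x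
        + η * ∑ x, γ x * Real.log (γ x / (μ1 x.1 * ∏ i, μ i (x.2 i)))
      = (∑ i, (∑ p, w i p.1 p.2 * π i p
          + η * ∑ p, π i p * Real.log (π i p / (μ1 p.1 * μ i p.2))))
        + η * ∑ x, γ x * Real.log (γ x / ρ x) := by
    simp_rw [hw, hRent]
    have hswap1 : ∑ i, ∑ x : X1 × (∀ j, X j), w i x.1 (x.2 i) * γ x
        = ∑ x : X1 × (∀ j, X j), (∑ i, w i x.1 (x.2 i)) * γ x := by
      rw [Finset.sum_comm]
      simp_rw [Finset.sum_mul]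
    have hswap2 : ∑ i, ∑ x : X1 × (∀ j, X j),
          (Real.log (π i (x.1, x.2 i)) - Real.log (μ1 x.1)
            - Real.log (μ i (x.2 i))) * γ x
        = ∑ x : X1 × (∀ j, X j), (∑ i, (Real.log (π i (x.1, x.2 i))
            - Real.log (μ1 x.1) - Real.log (μ i (x.2 i)))) * γ x := by
      rw [Finset.sum_comm]
      simp_rw [Finset.sum_mul]
    rw [Finset.sum_add_distrib, ← Finset.mul_sum, hswap1, hswap2]
    have hpt : ∀ x : X1 × (∀ j, X j),
        γ x * Real.log (γ x / (μ1 x.1 * ∏ i, μ i (x.2 i)))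
        = (∑ i, (Real.log (π i (x.1, x.2 i)) - Real.log (μ1 x.1)
            - Real.log (μ i (x.2 i)))) * γ x
          + γ x * Real.log (γ x / ρ x) := by
      intro x
      rcases eq_or_lt_of_le (hγ0 x) with h0 | h0
      · simp [← h0]
      · have hπpos : ∀ i, 0 < π i (x.1, x.2 i) :=
          fun i => lt_of_lt_of_le h0 (hπγ i x)
        have hprodpos : (0:ℝ) < ∏ i, (π i (x.1, x.2 i) / μ1 x.1) :=
          Finset.prod_pos fun i _ => div_pos (hπpos i) (hμ1 x.1)
        have hρpos : 0 < ρ x := mul_pos (hμ1 x.1) hprodpos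
        have hl1 : Real.log (γ x / (μ1 x.1 * ∏ i, μ i (x.2 i)))
            = Real.log (γ x) - Real.log (μ1 x.1)
              - ∑ i, Real.log (μ i (x.2 i)) := by
          rw [Real.log_div h0.ne'
              (mul_pos (hμ1 x.1) (Finset.prod_pos fun i _ => hμ i (x.2 i))).ne',
            Real.log_mul (hμ1 x.1).ne'
              (Finset.prod_pos fun i _ => hμ i (x.2 i)).ne',
            Real.log_prod (fun i _ => (hμ i (x.2 i)).ne')]
          ring
        have hl2 : Real.log (γ x / ρ x)
            = Real.log (γ x) - Real.log (μ1 x.1)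
              - ∑ i, (Real.log (π i (x.1, x.2 i)) - Real.log (μ1 x.1)) := by
          rw [Real.log_div h0.ne' hρpos.ne']
          have hlρ : Real.log (ρ x) = Real.log (μ1 x.1)
              + ∑ i, (Real.log (π i (x.1, x.2 i)) - Real.log (μ1 x.1)) := by
            have : ρ x = μ1 x.1 * ∏ i, (π i (x.1, x.2 i) / μ1 x.1) := rfl
            rw [this, Real.log_mul (hμ1 x.1).ne' hprodpos.ne',
              Real.log_prod
                (fun i _ => (div_pos (hπpos i) (hμ1 x.1)).ne')]
            congr 1
            refine Finset.sum_congr rfl fun i _ => ?_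
            exact Real.log_div (hπpos i).ne' (hμ1 x.1).ne'
          rw [hlρ]
          ring
        rw [hl1, hl2, Finset.sum_sub_distrib]
        ring
    simp_rw [hpt]
    rw [Finset.sum_add_distrib]
    ring
  refine ⟨?_, ?_⟩
  · rw [hkey]
    have : 0 ≤ η * ∑ x, γ x * Real.log (γ x / ρ x) := mul_nonneg hη.le hS0
    linarith
  · rw [hkey]
    constructor
    · intro h
      have hη0 : η * ∑ x, γ x * Real.log (γ x / ρ x) = 0 := by linarith
      have hScero : ∑ x, γ x * Real.log (γ x / ρ x) = 0 := by
        rcases mul_eq_zero.mp hη0 with h' | h'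
        · exact absurd h' hη.ne'
        · exact h'
      have hall := hSeq.mp hScero
      have hall' : ∀ (z : X1) (y : ∀ j, X j),
          γ (z, y) = μ1 z * ∏ i, (π i (z, y i) / μ1 z) :=
        fun z y => hall (z, y)
      intro z hz y
      rw [hall' z y, mul_comm, mul_div_assoc, div_self hz, mul_one]
    · intro h
      have hall : ∀ x, γ x = ρ x := by
        rintro ⟨z, y⟩
        have h2 := h z (hμ1 z).ne' y
        rw [div_eq_iff (hμ1 z).ne'] at h2
        show γ (z, y) = μ1 z * ∏ i, (π i (z, y i) / μ1 z)
        rw [h2, mul_comm]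
      have : ∑ x, γ x * Real.log (γ x / ρ x) = 0 := hSeq.mpr hall
      rw [this]
      ring
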